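/- Let S denote the class of functions H : {0,1} × {0,1} → ℝ that are symmetric and of the form H(x₁,x₂) = φ(x₁) + φ(x₂) for some φ : {0,1} → ℝ, and let D denote the class of functions of the form H(x₁,x₂) = g(f(x₁) + f(x₂)) for some f, g : ℝ → ℝ. Then S ⊆ D (take g = id), and D ⊋ S since the XOR indicator lies in D but not in S. -/
import Mathlib


/-- Coerce a Boolean to a real number. -/
def b2r (b : Bool) : ℝ := if b then 1 else 0

/-- Singleton-partition GMAN class: symmetric additive functions with a shared score. -/
def SClass : Set (Bool → Bool → ℝ) :=
  {H | (∀ x y, H x y = H y x) ∧ ∃ φ : Bool → ℝ, ∀ x y, H x y = φ x + φ y}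

/-- Paired-partition GMAN class: DeepSet form g(f(x₁) + f(x₂)). -/
def DClass : Set (Bool → Bool → ℝ) :=
  {H | ∃ f g : ℝ → ℝ, ∀ x y, H x y = g (f (b2r x) + f (b2r y))}

/-- The XOR indicator function. -/
def xorInd : Bool → Bool → ℝ := fun x₁ x₂ => if xor x₁ x₂ then 1 else 0

lemma sub_lemma : SClass ⊆ DClass := by
  rintro H ⟨-, φ, hφ⟩
  refine ⟨id, fun r => if r = 0 then 2 * φ false else if r = 1 then φ false + φ true
    else 2 * φ true, ?_⟩
  rintro (_|_) (_|_) <;> simp [hφ, b2r] <;> norm_num <;> ring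

lemma xor_mem : xorInd ∈ DClass \ SClass := by
  constructor
  · refine ⟨id, fun r => if r = 1 then 1 else 0, ?_⟩
    rintro (_|_) (_|_) <;> norm_num [xorInd, b2r]
  · rintro ⟨-, φ, hφ⟩
    have h1 := hφ false false
    have h2 := hφ true true
    have h3 := hφ false true
    simp [xorInd] at h1 h2 h3
    linarith

/-- S ⊆ D (take g = id), and the containment is strict: the XOR indicator lies in
D but not in S. Grouped subset mixing is strictly more expressive than singleton
partitioning. -/
theorem stmt_8 :
    SClass ⊆ DClass ∧ SClass ⊂ DClass ∧ xorInd ∈ DClass \ SClass := by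
  refine ⟨sub_lemma, ⟨sub_lemma, fun h => xor_mem.2 (h xor_mem.1)⟩, xor_mem⟩
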